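/- Let (X, dist) be a metric space and P a finite set of points. Fix r > 0 and for each p ∈ P let B(p) = {q ∈ P : dist(p,q) ≤ r} and E(p) = {q ∈ P : dist(p,q) ≤ 3r}. Run the greedy procedure: ℓ times, pick the point p whose ball B(p) (restricted to unmarked points) has maximum cardinality, then mark all unmarked points of E(p). If there exist ℓ points t₁,…,t_ℓ of P such that the balls {q ∈ P : dist(tᵢ,q) ≤ r} cover at least n−z points of P, then the greedy procedure marks at least n−z points. -/

import Mathlib

attribute [local instance] Classical.propDecidable

/-- Correctness of the greedy procedure for ℓ-center clustering with `z` outliers: if some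
`ℓ` balls of radius `r` centered at points `t i` cover at least `n - z` points of `P`,
then the greedy procedure (repeatedly pick the point whose radius-`r` ball contains the
most unmarked points, then mark its radius-`3r` ball) marks at least `n - z` points. -/
theorem greedy_outliers_correct {X : Type*} [MetricSpace X]
    (P : Finset X) (ℓ z : ℕ) (hℓ : 1 ≤ ℓ) (r : ℝ) (hr : 0 < r)
    (p : ℕ → X) (M : ℕ → Finset X)
    (hM0 : M 0 = ∅)
    (hpick : ∀ i < ℓ, p i ∈ P ∧
      (∀ x ∈ P, ((P.filter fun y => dist x y ≤ r) \ M i).card ≤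
        ((P.filter fun y => dist (p i) y ≤ r) \ M i).card) ∧
      M (i + 1) = M i ∪ (P.filter fun y => dist (p i) y ≤ 3 * r))
    (t : Fin ℓ → X) (ht : ∀ i, t i ∈ P)
    (hcov : P.card - z ≤ (P.filter fun q => ∃ i, dist (t i) q ≤ r).card) :
    P.card - z ≤ (M ℓ).card := by
  classical
  set C : Finset X := P.filter fun q => ∃ i, dist (t i) q ≤ r with hC
  set T : Fin ℓ → Finset X := fun j => P.filter fun y => dist (t j) y ≤ r with hT
  have key : ∀ i, i ≤ ℓ → ∃ V : Finset (Fin ℓ), V.card + i ≤ ℓ ∧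
      C.card ≤ (M i ∪ V.biUnion T).card := by
    intro i
    induction i with
    | zero =>
      intro _
      refine ⟨Finset.univ, by simp, Finset.card_le_card ?_⟩
      intro q hq
      simp only [hC, Finset.mem_filter] at hq
      obtain ⟨hqP, j, hj⟩ := hq
      exact Finset.mem_union_right _
        (Finset.mem_biUnion.2 ⟨j, Finset.mem_univ _, Finset.mem_filter.2 ⟨hqP, hj⟩⟩)
    | succ i ih =>
      intro hi
      obtain ⟨V, hVcard, hVle⟩ := ih (by omega)
      obtain ⟨hpP, hmax, hM⟩ := hpick i (by omega)
      set B : Finset X := P.filter fun y => dist (p i) y ≤ r with hB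
      have hBM : B ⊆ M (i + 1) := by
        intro x hx
        rw [hM]
        refine Finset.mem_union_right _ ?_
        simp only [hB, Finset.mem_filter] at hx ⊢
        exact ⟨hx.1, by linarith [hx.2]⟩
      by_cases hcase : ∃ j ∈ V, (B ∩ T j).Nonempty
      · -- Case A: the greedy ball hits some alive optimal ball
        obtain ⟨j₀, hj₀V, hne⟩ := hcase
        set V' : Finset (Fin ℓ) := V.filter fun j => ¬ (B ∩ T j).Nonempty with hV'
        have hsub : V' ⊆ V.erase j₀ := by
          intro j hj
          simp only [hV', Finset.mem_filter] at hj
          refine Finset.mem_erase.2 ⟨?_, hj.1⟩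
          rintro rfl; exact hj.2 hne
        have hcard' : V'.card + (i + 1) ≤ ℓ := by
          have h1 : V'.card ≤ (V.erase j₀).card := Finset.card_le_card hsub
          have h2 : (V.erase j₀).card = V.card - 1 := Finset.card_erase_of_mem hj₀V
          have h3 : 1 ≤ V.card := Finset.card_pos.2 ⟨j₀, hj₀V⟩
          omega
        refine ⟨V', hcard', le_trans hVle (Finset.card_le_card ?_)⟩
        intro q hq
        rcases Finset.mem_union.1 hq with hq | hq
        · exact Finset.mem_union_left _ (by rw [hM]; exact Finset.mem_union_left _ hq)
        · obtain ⟨j, hjV, hqT⟩ := Finset.mem_biUnion.1 hq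
          by_cases hj : (B ∩ T j).Nonempty
          · obtain ⟨x, hx⟩ := hj
            have hxB := Finset.mem_inter.1 hx |>.1
            have hxT := Finset.mem_inter.1 hx |>.2
            simp only [hB, Finset.mem_filter] at hxB
            simp only [hT, Finset.mem_filter] at hxT hqT
            refine Finset.mem_union_left _ ?_
            rw [hM]
            refine Finset.mem_union_right _ (Finset.mem_filter.2 ⟨hqT.1, ?_⟩)
            have htri : dist (p i) q ≤ dist (p i) x + dist (t j) x + dist (t j) q := by
              calc dist (p i) q ≤ dist (p i) x + dist x q := dist_triangle _ _ _
                _ ≤ dist (p i) x + (dist x (t j) + dist (t j) q) := by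
                    linarith [dist_triangle x (t j) q]
                _ = dist (p i) x + dist (t j) x + dist (t j) q := by
                    rw [dist_comm x (t j)]; ring
            linarith [hxB.2, hxT.2, hqT.2]
          · exact Finset.mem_union_right _
              (Finset.mem_biUnion.2 ⟨j, Finset.mem_filter.2 ⟨hjV, hj⟩, hqT⟩)
      · -- Case B: the greedy ball misses all alive optimal balls
        push_neg at hcase
        rcases V.eq_empty_or_nonempty with rfl | ⟨j₀, hj₀V⟩
        · refine ⟨∅, by simp only [Finset.card_empty]; omega, le_trans hVle (Finset.card_le_card ?_)⟩
          refine Finset.union_subset_union (by rw [hM]; exact Finset.subset_union_left)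
            (by simp)
        · set V' : Finset (Fin ℓ) := V.erase j₀ with hV'
          have hcard' : V'.card + (i + 1) ≤ ℓ := by
            have h2 : V'.card = V.card - 1 := Finset.card_erase_of_mem hj₀V
            have h3 : 1 ≤ V.card := Finset.card_pos.2 ⟨j₀, hj₀V⟩
            omega
          set old : Finset X := M i ∪ V.biUnion T with hold
          set new : Finset X := M (i + 1) ∪ V'.biUnion T with hnew
          set G : Finset X := B \ M i with hG
          have h1 : old \ new ⊆ T j₀ \ M i := by
            intro q hq
            obtain ⟨hqo, hqn⟩ := Finset.mem_sdiff.1 hq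
            have hqMi : q ∉ M i := by
              intro h
              exact hqn (Finset.mem_union_left _ (by rw [hM]; exact Finset.mem_union_left _ h))
            rcases Finset.mem_union.1 hqo with h | h
            · exact absurd h hqMi
            · obtain ⟨j, hjV, hqT⟩ := Finset.mem_biUnion.1 h
              rcases eq_or_ne j j₀ with rfl | hne
              · exact Finset.mem_sdiff.2 ⟨hqT, hqMi⟩
              · exact absurd (Finset.mem_union_right _
                  (Finset.mem_biUnion.2 ⟨j, Finset.mem_erase.2 ⟨hne, hjV⟩, hqT⟩)) hqn
          have h2 : G ⊆ new \ old := by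
            intro x hx
            obtain ⟨hxB, hxM⟩ := Finset.mem_sdiff.1 hx
            refine Finset.mem_sdiff.2 ⟨Finset.mem_union_left _ (hBM hxB), ?_⟩
            intro h
            rcases Finset.mem_union.1 h with h | h
            · exact hxM h
            · obtain ⟨j, hjV, hxT⟩ := Finset.mem_biUnion.1 h
              exact Finset.not_nonempty_iff_eq_empty.2 (hcase j hjV) ⟨x, Finset.mem_inter.2 ⟨hxB, hxT⟩⟩
          have h4 : (T j₀ \ M i).card ≤ G.card := hmax (t j₀) (ht j₀)
          have hfinal : old.card ≤ new.card := by
            have e1 : (old ∩ new).card + (old \ new).card = old.card :=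
              Finset.card_inter_add_card_sdiff old new
            have e2 : (new ∩ old).card + (new \ old).card = new.card :=
              Finset.card_inter_add_card_sdiff new old
            have e3 : (old \ new).card ≤ (T j₀ \ M i).card := Finset.card_le_card h1
            have e4 : G.card ≤ (new \ old).card := Finset.card_le_card h2
            have e5 : (old ∩ new).card = (new ∩ old).card := by rw [Finset.inter_comm]
            omega
          exact ⟨V', hcard', le_trans hVle hfinal⟩
  obtain ⟨V, hVcard, hVle⟩ := key ℓ le_rfl
  have hV0 : V = ∅ := Finset.card_eq_zero.1 (by omega)
  rw [hV0] at hVle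
  simp only [Finset.biUnion_empty, Finset.union_empty] at hVle
  exact le_trans hcov (le_trans hVle le_rfl)
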